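/- Let n, r ≥ 1 be integers, q an odd prime power, E a nonempty subset of (M_n(𝔽_q))^r, and T ∈ M_n(𝔽_q). Then the incidence function satisfies the exact identity ν(T) = (#σ_T)/q^{rn²} + (q^{2rn²}/(#E)²) · Σ_{𝐌 ∈ (M_n(𝔽_q))^r, 𝐌 ≠ 0} |Ê(𝐌)|² · σ̂_T(𝐌). -/

import Mathlib

open scoped BigOperators

/-- The additive character `ψ(X) = exp((2πi/p)·Tr_{F/F_p}(Tr X))` on `n × n` matrices
over a finite field `F` of characteristic `p`. -/
noncomputable def psi (F : Type) [Field F] [Fintype F] {n : ℕ}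
    (X : Matrix (Fin n) (Fin n) F) : ℂ :=
  letI : Algebra (ZMod (ringChar F)) F := ZMod.algebra _ _
  Complex.exp (2 * Real.pi * Complex.I *
    (((Algebra.trace (ZMod (ringChar F)) F X.trace).val : ℂ) / (ringChar F : ℂ)))

/-- The radical `{X : Tr(A(XY+YX)) = 0 for all Y}` of the quadratic form
`X ↦ Tr(AX²)` on `M_n(F)`. -/
def radical (F : Type) [Field F] [Fintype F] {n : ℕ}
    (A : Matrix (Fin n) (Fin n) F) : Submodule F (Matrix (Fin n) (Fin n) F) where
  carrier := {X : Matrix (Fin n) (Fin n) F |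
    ∀ Y : Matrix (Fin n) (Fin n) F, (A * (X * Y + Y * X)).trace = 0}
  zero_mem' := by intro Y; simp
  add_mem' := by
    intro X₁ X₂ h₁ h₂ Y
    have e : A * ((X₁ + X₂) * Y + Y * (X₁ + X₂))
        = A * (X₁ * Y + Y * X₁) + A * (X₂ * Y + Y * X₂) := by noncomm_ring
    show (A * ((X₁ + X₂) * Y + Y * (X₁ + X₂))).trace = 0
    rw [e, Matrix.trace_add, h₁ Y, h₂ Y, add_zero]
  smul_mem' := by
    intro c X h Y
    have e : A * ((c • X) * Y + Y * (c • X)) = c • (A * (X * Y + Y * X)) := by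
      rw [smul_mul_assoc, Matrix.mul_smul, ← smul_add, Matrix.mul_smul]
    show (A * ((c • X) * Y + Y * (c • X))).trace = 0
    rw [e, Matrix.trace_smul, h Y, smul_zero]

/-- The radical invariant `ρ_A`: the `F`-dimension of the radical of `X ↦ Tr(AX²)`. -/
noncomputable def rho (F : Type) [Field F] [Fintype F] {n : ℕ}
    (A : Matrix (Fin n) (Fin n) F) : ℕ :=
  Module.finrank F (radical F A)

/-- The quadratic matrix Gauss sum `G(A,B) = Σ_X ψ(AX² + BX)`. -/
noncomputable def matGaussSum (F : Type) [Field F] [Fintype F] {n : ℕ}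
    (A B : Matrix (Fin n) (Fin n) F) : ℂ :=
  ∑ X : Matrix (Fin n) (Fin n) F, psi F (A * X ^ 2 + B * X)

/-- The matrix sphere `σ_T = {X ∈ M_n(F)^r : X₁² + ⋯ + X_r² = T}`. -/
def matSphere (F : Type) [Field F] [Fintype F] [DecidableEq F] {n : ℕ} (r : ℕ)
    (T : Matrix (Fin n) (Fin n) F) : Finset (Fin r → Matrix (Fin n) (Fin n) F) :=
  Finset.univ.filter (fun X => ∑ i, (X i) ^ 2 = T)

/-- The Fourier transform `f̂(M) = q^{-rn²} Σ_A f(A) conj(ψ(M·A))` on `M_n(F)^r`. -/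
noncomputable def matFourier (F : Type) [Field F] [Fintype F] {n r : ℕ}
    (f : (Fin r → Matrix (Fin n) (Fin n) F) → ℂ)
    (M : Fin r → Matrix (Fin n) (Fin n) F) : ℂ :=
  ((Fintype.card F : ℂ) ^ (r * n ^ 2))⁻¹ *
    ∑ A : Fin r → Matrix (Fin n) (Fin n) F, f A * (starRingEnd ℂ) (psi F (∑ i, M i * A i))


section auxII
variable (F : Type) [Field F] [Fintype F] [DecidableEq F]

/-- `ψ` as an additive character, via the standard character on `ZMod p`. -/
noncomputable def psiCharII (n : ℕ) : AddChar (Matrix (Fin n) (Fin n) F) ℂ :=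
  letI : Algebra (ZMod (ringChar F)) F := ZMod.algebra _ _
  haveI : Fact (ringChar F).Prime := ⟨CharP.char_is_prime F _⟩
  haveI : NeZero (ringChar F) := ⟨(Fact.out (p := (ringChar F).Prime)).pos.ne'⟩
  ZMod.stdAddChar.compAddMonoidHom
    ((Algebra.trace (ZMod (ringChar F)) F).toAddMonoidHom.comp
      (Matrix.traceLinearMap (Fin n) F F).toAddMonoidHom)

variable {n r : ℕ}

lemma psiCharII_apply (X : Matrix (Fin n) (Fin n) F) : psiCharII F n X = psi F X := by
  letI : Algebra (ZMod (ringChar F)) F := ZMod.algebra _ _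
  haveI : Fact (ringChar F).Prime := ⟨CharP.char_is_prime F _⟩
  haveI : NeZero (ringChar F) := ⟨(Fact.out (p := (ringChar F).Prime)).pos.ne'⟩
  simp only [psi, psiCharII, AddChar.compAddMonoidHom_apply, AddMonoidHom.coe_comp,
    LinearMap.toAddMonoidHom_coe, Function.comp_apply, Matrix.traceLinearMap_apply,
    ZMod.stdAddChar_apply, ZMod.toCircle_apply, mul_div_assoc]

lemma abs_psiII (X : Matrix (Fin n) (Fin n) F) : ‖psi F X‖ = 1 := by
  rw [← psiCharII_apply]
  letI : Algebra (ZMod (ringChar F)) F := ZMod.algebra _ _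
  haveI : Fact (ringChar F).Prime := ⟨CharP.char_is_prime F _⟩
  haveI : NeZero (ringChar F) := ⟨(Fact.out (p := (ringChar F).Prime)).pos.ne'⟩
  simp [psiCharII, ZMod.stdAddChar_apply, Circle.norm_coe]

lemma psi_addII (X Y : Matrix (Fin n) (Fin n) F) : psi F (X + Y) = psi F X * psi F Y := by
  rw [← psiCharII_apply, ← psiCharII_apply, ← psiCharII_apply, AddChar.map_add_eq_mul]

lemma psi_zeroII : psi F (0 : Matrix (Fin n) (Fin n) F) = 1 := by
  rw [← psiCharII_apply]; exact AddChar.map_zero_eq_one _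

lemma conj_psiII (X : Matrix (Fin n) (Fin n) F) :
    (starRingEnd ℂ) (psi F X) = psi F (-X) := by
  have h1 : psi F X * psi F (-X) = 1 := by rw [← psi_addII]; simp [psi_zeroII]
  have h2 : psi F (-X) = (psi F X)⁻¹ := eq_inv_of_mul_eq_one_right h1
  rw [h2, ← Complex.inv_eq_conj (abs_psiII F X)]

lemma card_GII : Fintype.card (Fin r → Matrix (Fin n) (Fin n) F)
    = Fintype.card F ^ (r * n ^ 2) := by
  have h1 : Fintype.card (Matrix (Fin n) (Fin n) F) = Fintype.card F ^ (n ^ 2) := by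
    have : Fintype.card (Matrix (Fin n) (Fin n) F)
        = Fintype.card (Fin n → Fin n → F) := rfl
    rw [this, Fintype.card_fun, Fintype.card_fun, ← pow_mul, Fintype.card_fin, sq]
  rw [Fintype.card_fun, h1, ← pow_mul, Fintype.card_fin, Nat.mul_comm]

lemma trace_stdII (B : Matrix (Fin n) (Fin n) F) (j k : Fin n) (b : F) :
    (Matrix.single k j b * B).trace = b * B j k := by
  classical
  rw [Matrix.trace]
  rw [Finset.sum_eq_single k]
  · simp [Matrix.diag]
  · intro d _ hd
    simpa [Matrix.diag] using Matrix.single_mul_apply_of_ne b k j d d hd B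
  · simp

/-- The pairing `M ↦ ∑ i, M i * A i` as an `AddMonoidHom`. -/
def dotHomII (A : Fin r → Matrix (Fin n) (Fin n) F) :
    (Fin r → Matrix (Fin n) (Fin n) F) →+ Matrix (Fin n) (Fin n) F :=
  AddMonoidHom.mk' (fun M => ∑ i, M i * A i) (by
    intro M N
    simp [add_mul, Finset.sum_add_distrib])

lemma sum_psi_dotII (A : Fin r → Matrix (Fin n) (Fin n) F) :
    ∑ M : Fin r → Matrix (Fin n) (Fin n) F, psi F (∑ i, M i * A i)
      = if A = 0 then ((Fintype.card F : ℂ) ^ (r * n ^ 2)) else 0 := by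
  classical
  split_ifs with hA
  · subst hA
    have : ∀ M : Fin r → Matrix (Fin n) (Fin n) F,
        psi F (∑ i, M i * (0 : Fin r → Matrix (Fin n) (Fin n) F) i) = 1 := by
      intro M; simp [psi_zeroII]
    simp only [this, Finset.sum_const, Finset.card_univ, nsmul_eq_mul, mul_one]
    rw [card_GII]; push_cast; ring
  · letI : Algebra (ZMod (ringChar F)) F := ZMod.algebra _ _
    haveI : Fact (ringChar F).Prime := ⟨CharP.char_is_prime F _⟩
    haveI : NeZero (ringChar F) := ⟨(Fact.out (p := (ringChar F).Prime)).pos.ne'⟩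
    set χ : AddChar (Fin r → Matrix (Fin n) (Fin n) F) ℂ :=
      (psiCharII F n).compAddMonoidHom (dotHomII F A) with hχ
    have hsum : ∑ M : Fin r → Matrix (Fin n) (Fin n) F, psi F (∑ i, M i * A i)
        = ∑ M, χ M := by
      refine Finset.sum_congr rfl fun M _ => ?_
      rw [hχ, AddChar.compAddMonoidHom_apply, psiCharII_apply]
      rfl
    rw [hsum]
    refine AddChar.sum_eq_zero_of_ne_one ?_
    rw [AddChar.ne_one_iff]
    have h1 : ∃ i, A i ≠ 0 := by
      by_contra h; push_neg at h; exact hA (funext h)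
    obtain ⟨i, hi⟩ := h1
    have h2 : ∃ j k, A i j k ≠ 0 := by
      by_contra h; push_neg at h
      exact hi (Matrix.ext fun j k => h j k)
    obtain ⟨j, k, hjk⟩ := h2
    obtain ⟨b, hb⟩ := FiniteField.trace_to_zmod_nondegenerate F hjk
    refine ⟨Pi.single i (Matrix.single k j b), ?_⟩
    have hφ : dotHomII F A (Pi.single i (Matrix.single k j b))
        = Matrix.single k j b * A i := by
      show ∑ i', Pi.single i (Matrix.single k j b) i' * A i' = _
      rw [Finset.sum_eq_single i]
      · rw [Pi.single_eq_same]
      · intro d _ hd; rw [Pi.single_eq_of_ne hd, zero_mul]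
      · simp
    intro hone
    rw [hχ, AddChar.compAddMonoidHom_apply, hφ] at hone
    have htr : (Matrix.single k j b * A i).trace = A i j k * b := by
      rw [trace_stdII]; ring
    have h0 : psiCharII F n (Matrix.single k j b * A i)
        = ZMod.stdAddChar (Algebra.trace (ZMod (ringChar F)) F (A i j k * b)) := by
      rw [← htr]; rfl
    rw [h0] at hone
    exact hb (ZMod.injective_stdAddChar (N := ringChar F)
      (hone.trans (AddChar.map_zero_eq_one _).symm))

end auxII

set_option maxHeartbeats 1000000 in
/-- Equation (3.3): the exact incidence identity
`ν(T) = #σ_T / q^{rn²} + (q^{2rn²}/(#E)²) Σ_{M ≠ 0} |Ê(M)|² σ̂_T(M)`. -/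
theorem incidence_identity (n r : ℕ) (hn : 1 ≤ n) (hr : 1 ≤ r)
    (F : Type) [Field F] [Fintype F] [DecidableEq F]
    (hq : Odd (Fintype.card F))
    (E : Finset (Fin r → Matrix (Fin n) (Fin n) F)) (hE : E.Nonempty)
    (T : Matrix (Fin n) (Fin n) F) :
    (((E ×ˢ E).filter
        (fun p : (Fin r → Matrix (Fin n) (Fin n) F) × (Fin r → Matrix (Fin n) (Fin n) F) =>
          ∑ i, (p.1 i - p.2 i) ^ 2 = T)).card : ℂ) / (E.card : ℂ) ^ 2 =
      ((matSphere F r T).card : ℂ) / (Fintype.card F : ℂ) ^ (r * n ^ 2) +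
        ((Fintype.card F : ℂ) ^ (2 * r * n ^ 2) / (E.card : ℂ) ^ 2) *
          ∑ M ∈ Finset.univ.filter (fun M : Fin r → Matrix (Fin n) (Fin n) F => M ≠ 0),
            ((‖matFourier F (fun A => if A ∈ E then (1 : ℂ) else 0) M‖ : ℂ) ^ 2 *
              matFourier F (fun X => if (∑ i, (X i) ^ 2) = T then (1 : ℂ) else 0) M) := by
  classical
  have hq0 : (Fintype.card F : ℂ) ≠ 0 := Nat.cast_ne_zero.2 Fintype.card_ne_zero
  set Q : ℂ := (Fintype.card F : ℂ) ^ (r * n ^ 2) with hQdef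
  have hQ0 : Q ≠ 0 := pow_ne_zero _ hq0
  have hE0 : (E.card : ℂ) ≠ 0 := Nat.cast_ne_zero.2 hE.card_pos.ne'
  set e : (Fin r → Matrix (Fin n) (Fin n) F) → ℂ :=
    fun A => if A ∈ E then (1 : ℂ) else 0 with he
  set s : (Fin r → Matrix (Fin n) (Fin n) F) → ℂ :=
    fun X => if (∑ i, (X i) ^ 2) = T then (1 : ℂ) else 0 with hs
  have hQconj : (starRingEnd ℂ) Q = Q := by
    rw [hQdef]; rw [map_pow, Complex.conj_natCast]
  -- Fourier inversion for s
  have hinv : ∀ Z : Fin r → Matrix (Fin n) (Fin n) F,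
      ∑ M : Fin r → Matrix (Fin n) (Fin n) F,
        matFourier F s M * psi F (∑ i, M i * Z i) = s Z := by
    intro Z
    have expand : ∀ M : Fin r → Matrix (Fin n) (Fin n) F,
        matFourier F s M * psi F (∑ i, M i * Z i)
          = ∑ A : Fin r → Matrix (Fin n) (Fin n) F,
              Q⁻¹ * (s A * psi F (∑ i, M i * (Z - A) i)) := by
      intro M
      simp only [matFourier, ← hQdef]
      rw [mul_assoc, Finset.sum_mul, Finset.mul_sum]
      refine Finset.sum_congr rfl fun A _ => ?_
      rw [conj_psiII, mul_assoc, ← psi_addII]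
      congr 2
      simp [Pi.sub_apply, mul_sub, Finset.sum_sub_distrib, neg_add_eq_sub]
    rw [Finset.sum_congr rfl fun M _ => expand M, Finset.sum_comm]
    have inner : ∀ A : Fin r → Matrix (Fin n) (Fin n) F,
        ∑ M : Fin r → Matrix (Fin n) (Fin n) F,
          Q⁻¹ * (s A * psi F (∑ i, M i * (Z - A) i))
          = if Z = A then Q⁻¹ * (s A * Q) else 0 := by
      intro A
      rw [← Finset.mul_sum, ← Finset.mul_sum, sum_psi_dotII, ← hQdef]
      simp only [sub_eq_zero]
      split_ifs <;> simp
    rw [Finset.sum_congr rfl fun A _ => inner A, Finset.sum_ite_eq]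
    simp only [Finset.mem_univ, if_true]
    rw [mul_comm (s Z) Q, ← mul_assoc, inv_mul_cancel₀ hQ0, one_mul]
  -- the count as a double sum
  have hext : ∀ g : (Fin r → Matrix (Fin n) (Fin n) F) → ℂ,
      ∑ X : Fin r → Matrix (Fin n) (Fin n) F, e X * g X = ∑ X ∈ E, g X := by
    intro g
    simp only [he, ite_mul, one_mul, zero_mul]
    rw [Finset.sum_ite_mem, Finset.univ_inter]
  have hcount : (((E ×ˢ E).filter
        (fun p : (Fin r → Matrix (Fin n) (Fin n) F) × (Fin r → Matrix (Fin n) (Fin n) F) =>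
          ∑ i, (p.1 i - p.2 i) ^ 2 = T)).card : ℂ)
      = ∑ X : Fin r → Matrix (Fin n) (Fin n) F,
          ∑ Y : Fin r → Matrix (Fin n) (Fin n) F, e X * (e Y * s (X - Y)) := by
    have h1 : ∑ X : Fin r → Matrix (Fin n) (Fin n) F,
        ∑ Y : Fin r → Matrix (Fin n) (Fin n) F, e X * (e Y * s (X - Y))
        = ∑ X ∈ E, ∑ Y ∈ E, s (X - Y) := by
      rw [← hext (fun X => ∑ Y ∈ E, s (X - Y))]
      refine Finset.sum_congr rfl fun X _ => ?_
      rw [← hext (fun Y => s (X - Y)), Finset.mul_sum]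
    rw [Finset.card_filter]
    push_cast
    rw [Finset.sum_product, h1]
    refine Finset.sum_congr rfl fun X _ => Finset.sum_congr rfl fun Y _ => ?_
    simp only [hs, Pi.sub_apply]
  -- the convolution identity
  have hFe : ∀ M : Fin r → Matrix (Fin n) (Fin n) F,
      ∑ A : Fin r → Matrix (Fin n) (Fin n) F,
        e A * (starRingEnd ℂ) (psi F (∑ i, M i * A i)) = Q * matFourier F e M := by
    intro M
    simp only [matFourier, ← hQdef, ← mul_assoc, mul_inv_cancel₀ hQ0, one_mul]
  have hFe' : ∀ M : Fin r → Matrix (Fin n) (Fin n) F,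
      ∑ A : Fin r → Matrix (Fin n) (Fin n) F,
        e A * psi F (∑ i, M i * A i) = (starRingEnd ℂ) (Q * matFourier F e M) := by
    intro M
    rw [← hFe M, map_sum]
    refine Finset.sum_congr rfl fun A _ => ?_
    rw [map_mul, Complex.conj_conj]
    congr 1
    simp only [he, apply_ite (starRingEnd ℂ), map_one, map_zero]
  have hmain : ∑ X : Fin r → Matrix (Fin n) (Fin n) F,
      ∑ Y : Fin r → Matrix (Fin n) (Fin n) F, e X * (e Y * s (X - Y))
      = ∑ M : Fin r → Matrix (Fin n) (Fin n) F,
          matFourier F s M *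
            ((starRingEnd ℂ) (Q * matFourier F e M) * (Q * matFourier F e M)) := by
    have step1 : ∀ X Y : Fin r → Matrix (Fin n) (Fin n) F, e X * (e Y * s (X - Y))
        = ∑ M : Fin r → Matrix (Fin n) (Fin n) F,
            matFourier F s M * ((e X * psi F (∑ i, M i * X i))
              * (e Y * (starRingEnd ℂ) (psi F (∑ i, M i * Y i)))) := by
      intro X Y
      have hψ : ∀ M : Fin r → Matrix (Fin n) (Fin n) F, psi F (∑ i, M i * (X - Y) i)
          = psi F (∑ i, M i * X i) * (starRingEnd ℂ) (psi F (∑ i, M i * Y i)) := by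
        intro M
        rw [conj_psiII, ← psi_addII]
        congr 1
        rw [← Finset.sum_neg_distrib, ← Finset.sum_add_distrib]
        refine Finset.sum_congr rfl fun i _ => ?_
        rw [Pi.sub_apply, mul_sub, sub_eq_add_neg]
      rw [← hinv (X - Y), Finset.mul_sum, Finset.mul_sum]
      refine Finset.sum_congr rfl fun M _ => ?_
      rw [hψ M]; ring
    rw [Finset.sum_congr rfl fun X _ => Finset.sum_congr rfl fun Y _ => step1 X Y]
    rw [Finset.sum_congr rfl fun X (_ : X ∈ Finset.univ) => Finset.sum_comm, Finset.sum_comm]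
    refine Finset.sum_congr rfl fun M _ => ?_
    rw [← hFe' M, ← hFe M, Finset.sum_mul_sum, Finset.mul_sum]
    refine Finset.sum_congr rfl fun X _ => ?_
    rw [Finset.mul_sum]
  -- values at M = 0
  have hsum_e : ∑ A : Fin r → Matrix (Fin n) (Fin n) F, e A = (E.card : ℂ) := by
    have := hext fun _ => (1 : ℂ)
    simpa using this
  have hpsi0 : ∀ A : Fin r → Matrix (Fin n) (Fin n) F,
      psi F (∑ i, (0 : Fin r → Matrix (Fin n) (Fin n) F) i * A i) = 1 := by
    intro A
    have : (∑ i, (0 : Fin r → Matrix (Fin n) (Fin n) F) i * A i) = 0 := by simp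
    rw [this, psi_zeroII]
  have he0 : matFourier F e 0 = Q⁻¹ * (E.card : ℂ) := by
    simp only [matFourier, ← hQdef]
    congr 1
    rw [← hsum_e]
    refine Finset.sum_congr rfl fun A _ => ?_
    rw [hpsi0 A, map_one, mul_one]
  have hs0 : matFourier F s 0 = Q⁻¹ * ((matSphere F r T).card : ℂ) := by
    have hcardS : ((matSphere F r T).card : ℂ)
        = ∑ A : Fin r → Matrix (Fin n) (Fin n) F, s A := by
      rw [matSphere, Finset.card_filter]
      push_cast
      exact Finset.sum_congr rfl fun A _ => by simp only [hs]
    simp only [matFourier, ← hQdef]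
    congr 1
    rw [hcardS]
    refine Finset.sum_congr rfl fun A _ => ?_
    rw [hpsi0 A, map_one, mul_one]
  -- the term at M = 0
  have hf0 : matFourier F s 0 *
      ((starRingEnd ℂ) (Q * matFourier F e 0) * (Q * matFourier F e 0))
      = Q⁻¹ * ((matSphere F r T).card : ℂ) * (E.card : ℂ) ^ 2 := by
    have hQE : Q * (Q⁻¹ * (E.card : ℂ)) = (E.card : ℂ) := by
      field_simp
    rw [he0, hs0, hQE, Complex.conj_natCast]
    ring
  -- per-term rewriting for M ≠ 0
  have hterm : ∀ M : Fin r → Matrix (Fin n) (Fin n) F,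
      matFourier F s M *
        ((starRingEnd ℂ) (Q * matFourier F e M) * (Q * matFourier F e M))
      = (Q * Q) * (((‖matFourier F e M‖ : ℂ)) ^ 2 * matFourier F s M) := by
    intro M
    have habs : (((‖matFourier F e M‖ : ℂ)) : ℂ) ^ 2
        = (starRingEnd ℂ) (matFourier F e M) * matFourier F e M := by
      rw [mul_comm, Complex.mul_conj, ← Complex.sq_norm]
      push_cast
      ring
    rw [map_mul, hQconj, habs]
    ring
  -- assemble
  rw [hcount, hmain]
  have hsplit := (Finset.add_sum_erase Finset.univ
      (fun M : Fin r → Matrix (Fin n) (Fin n) F => matFourier F s M *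
        ((starRingEnd ℂ) (Q * matFourier F e M) * (Q * matFourier F e M)))
      (Finset.mem_univ (0 : Fin r → Matrix (Fin n) (Fin n) F))).symm
  rw [hsplit, hf0]
  have hfilter : (Finset.univ.filter
      (fun M : Fin r → Matrix (Fin n) (Fin n) F => M ≠ 0))
      = Finset.univ.erase 0 := Finset.filter_ne' _ _
  rw [hfilter]
  rw [Finset.sum_congr rfl fun M (_ : M ∈ Finset.univ.erase 0) => hterm M, ← Finset.mul_sum]
  have hQQ : Q * Q = (Fintype.card F : ℂ) ^ (2 * r * n ^ 2) := by
    rw [hQdef, ← pow_add]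
    congr 1
    ring
  rw [hQQ]
  field_simp
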